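/- Let σ, τ : ℝ → Matrix(k,k,ℂ) with σ differentiable at z ∈ ℝ and τ continuous at z. For h > 0 set γ*₋(h) = (1/(2h))·I + σ(z − h), γ₋(h) = γ*₋(h)ᴴ, γ*₊(h) = (1/(2h))·I + σ(z + h), γ₊(h) = γ*₊(h)ᴴ. Then the expression γ*₋(h)·γ₋(h) − γ₊(h)·γ*₊(h) + [τ(z), τ(z)ᴴ] tends to −( (σ + σᴴ)'(z) − [σ(z), σ(z)ᴴ] − [τ(z), τ(z)ᴴ] ) as h → 0⁺, where (σ + σᴴ)' denotes the derivative of z ↦ σ(z) + σ(z)ᴴ. -/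

import Mathlib

open Matrix Filter

attribute [local instance] Matrix.normedAddCommGroup Matrix.normedSpace

theorem stmt16 (k : ℕ) (hk : 1 ≤ k) (σ τ : ℝ → Matrix (Fin k) (Fin k) ℂ) (z : ℝ)
    (hσ : DifferentiableAt ℝ σ z) (hτ : ContinuousAt τ z) :
    Tendsto
      (fun h : ℝ =>
        ((1 / (2 * h)) • (1 : Matrix (Fin k) (Fin k) ℂ) + σ (z - h)) *
            ((1 / (2 * h)) • (1 : Matrix (Fin k) (Fin k) ℂ) + σ (z - h))ᴴ -
          ((1 / (2 * h)) • (1 : Matrix (Fin k) (Fin k) ℂ) + σ (z + h))ᴴ *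
            ((1 / (2 * h)) • (1 : Matrix (Fin k) (Fin k) ℂ) + σ (z + h)) +
          (τ z * (τ z)ᴴ - (τ z)ᴴ * τ z))
      (nhdsWithin 0 (Set.Ioi 0))
      (nhds (-(deriv (fun w => σ w + (σ w)ᴴ) z -
        (σ z * (σ z)ᴴ - (σ z)ᴴ * σ z) - (τ z * (τ z)ᴴ - (τ z)ᴴ * τ z)))) := by
  set F : ℝ → Matrix (Fin k) (Fin k) ℂ := fun w => σ w + (σ w)ᴴ with hFdef
  have hdF : DifferentiableAt ℝ F z := hσ.add hσ.star
  have hFd : HasDerivAt F (deriv F z) z := hdF.hasDerivAt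
  have hslope := hasDerivAt_iff_tendsto_slope.mp hFd
  have hplus : Tendsto (fun h : ℝ => z + h) (nhdsWithin 0 (Set.Ioi 0)) (nhdsWithin z {z}ᶜ) := by
    apply tendsto_nhdsWithin_of_tendsto_nhds_of_eventually_within
    · have : Tendsto (fun h : ℝ => z + h) (nhds 0) (nhds z) := by
        simpa using (show Continuous (fun h : ℝ => z + h) by fun_prop).tendsto (0 : ℝ)
      exact this.mono_left nhdsWithin_le_nhds
    · filter_upwards [self_mem_nhdsWithin] with h hh
      simp only [Set.mem_Ioi] at hh
      simp only [Set.mem_compl_iff, Set.mem_singleton_iff]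
      intro habs; nlinarith [congrArg (fun x => x - z) habs]
  have hminus : Tendsto (fun h : ℝ => z - h) (nhdsWithin 0 (Set.Ioi 0)) (nhdsWithin z {z}ᶜ) := by
    apply tendsto_nhdsWithin_of_tendsto_nhds_of_eventually_within
    · have : Tendsto (fun h : ℝ => z - h) (nhds 0) (nhds z) := by
        simpa using (show Continuous (fun h : ℝ => z - h) by fun_prop).tendsto (0 : ℝ)
      exact this.mono_left nhdsWithin_le_nhds
    · filter_upwards [self_mem_nhdsWithin] with h hh
      simp only [Set.mem_Ioi] at hh
      simp only [Set.mem_compl_iff, Set.mem_singleton_iff]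
      intro habs; nlinarith [congrArg (fun x => z - x) habs]
  have t1 := hslope.comp hplus
  have t2 := hslope.comp hminus
  have key : Tendsto (fun h : ℝ => (-(1/2) : ℝ) • (slope F z (z + h) + slope F z (z - h)))
      (nhdsWithin 0 (Set.Ioi 0)) (nhds (-deriv F z)) := by
    have := (t1.add t2).const_smul ((-(1/2) : ℝ))
    have e : (-(1/2) : ℝ) • (deriv F z + deriv F z) = -deriv F z := by module
    rw [e] at this
    exact this
  have hcσ : ContinuousAt σ z := hσ.continuousAt
  have hc1 : Tendsto (fun h : ℝ => σ (z - h)) (nhdsWithin 0 (Set.Ioi 0)) (nhds (σ z)) := by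
    refine hcσ.tendsto.comp ?_
    have : Tendsto (fun h : ℝ => z - h) (nhds 0) (nhds z) := by
      simpa using (show Continuous (fun h : ℝ => z - h) by fun_prop).tendsto (0 : ℝ)
    exact this.mono_left nhdsWithin_le_nhds
  have hc2 : Tendsto (fun h : ℝ => σ (z + h)) (nhdsWithin 0 (Set.Ioi 0)) (nhds (σ z)) := by
    refine hcσ.tendsto.comp ?_
    have : Tendsto (fun h : ℝ => z + h) (nhds 0) (nhds z) := by
      simpa using (show Continuous (fun h : ℝ => z + h) by fun_prop).tendsto (0 : ℝ)
    exact this.mono_left nhdsWithin_le_nhds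
  have hcstar1 : Tendsto (fun h : ℝ => (σ (z - h))ᴴ) (nhdsWithin 0 (Set.Ioi 0)) (nhds ((σ z)ᴴ)) :=
    (continuous_star.tendsto _).comp hc1
  have hcstar2 : Tendsto (fun h : ℝ => (σ (z + h))ᴴ) (nhdsWithin 0 (Set.Ioi 0)) (nhds ((σ z)ᴴ)) :=
    (continuous_star.tendsto _).comp hc2
  have htail : Tendsto
      (fun h : ℝ => σ (z - h) * (σ (z - h))ᴴ - (σ (z + h))ᴴ * σ (z + h) +
        (τ z * (τ z)ᴴ - (τ z)ᴴ * τ z))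
      (nhdsWithin 0 (Set.Ioi 0))
      (nhds (σ z * (σ z)ᴴ - (σ z)ᴴ * σ z + (τ z * (τ z)ᴴ - (τ z)ᴴ * τ z))) :=
    ((hc1.mul hcstar1).sub (hcstar2.mul hc2)).add tendsto_const_nhds
  have total := key.add htail
  have total' : Tendsto
      (fun h : ℝ => (-(1/2) : ℝ) • (slope F z (z + h) + slope F z (z - h)) +
        (σ (z - h) * (σ (z - h))ᴴ - (σ (z + h))ᴴ * σ (z + h) +
          (τ z * (τ z)ᴴ - (τ z)ᴴ * τ z)))
      (nhdsWithin 0 (Set.Ioi 0))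
      (nhds (-(deriv F z - (σ z * (σ z)ᴴ - (σ z)ᴴ * σ z) - (τ z * (τ z)ᴴ - (τ z)ᴴ * τ z)))) := by
    convert total using 2
    abel
  refine total'.congr' ?_
  filter_upwards [self_mem_nhdsWithin] with h hh
  simp only [Set.mem_Ioi] at hh
  have hne : h ≠ 0 := ne_of_gt hh
  simp only [slope_def_module, hFdef, add_sub_cancel_left, sub_sub_cancel_left]
  simp only [conjTranspose_add, conjTranspose_smul, conjTranspose_one, star_trivial,
    add_mul, mul_add, Matrix.smul_mul, Matrix.mul_smul, smul_smul, one_mul, mul_one,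
    smul_add, smul_sub]
  match_scalars <;> field_simp <;> ring
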